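/- For any E ≥ 0, the function x ↦ g(g⁻¹(x) + E) is increasing and convex on [0,∞). -/

import Mathlib

open Real Set Filter

noncomputable def g (E : ℝ) : ℝ := (E + 1) * Real.log (E + 1) - E * Real.log E

noncomputable def ginv : ℝ → ℝ := Function.invFunOn g (Set.Ici 0)

noncomputable def Lf (t : ℝ) : ℝ := Real.log (t + 1) - Real.log t

lemma Lf_pos {t : ℝ} (ht : 0 < t) : 0 < Lf t :=
  sub_pos.2 (Real.log_lt_log ht (by linarith))

lemma Lf_ge {t : ℝ} (ht : 0 < t) : 1 / (t + 1) ≤ Lf t := by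
  have h := Real.log_le_sub_one_of_pos (show (0:ℝ) < t / (t + 1) by positivity)
  rw [Real.log_div ht.ne' (by linarith)] at h
  have : t / (t + 1) - 1 = -(1 / (t + 1)) := by field_simp; ring
  rw [this] at h
  unfold Lf; linarith

lemma Lf_hasDerivAt {t : ℝ} (ht : 0 < t) :
    HasDerivAt Lf (1 / (t + 1) - 1 / t) t := by
  have h1 : HasDerivAt (fun y : ℝ => Real.log (y + 1)) (1 / (t + 1)) t := by
    have := (Real.hasDerivAt_log (by linarith : t + 1 ≠ 0)).comp t
      ((hasDerivAt_id t).add_const 1)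
    simpa [Function.comp_def] using this
  have h2 : HasDerivAt Real.log (1 / t) t := by
    simpa [one_div] using Real.hasDerivAt_log ht.ne'
  exact h1.sub h2

lemma g_continuous : Continuous g := by
  have h1 : Continuous fun y : ℝ => (y + 1) * Real.log (y + 1) :=
    Real.continuous_mul_log.comp (continuous_id.add continuous_const)
  exact h1.sub Real.continuous_mul_log

lemma g_hasDerivAt {t : ℝ} (ht : 0 < t) : HasDerivAt g (Lf t) t := by
  have h1 : HasDerivAt (fun y : ℝ => (y + 1) * Real.log (y + 1))
      (Real.log (t + 1) + 1) t := by
    have := (Real.hasDerivAt_mul_log (by linarith : t + 1 ≠ 0)).comp t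
      ((hasDerivAt_id t).add_const 1)
    simpa [Function.comp_def] using this
  have h2 : HasDerivAt (fun y : ℝ => y * Real.log y) (Real.log t + 1) t :=
    Real.hasDerivAt_mul_log ht.ne'
  have h3 := h1.sub h2
  refine h3.congr_deriv ?_
  unfold Lf; ring

lemma g_strictMono : StrictMonoOn g (Set.Ici 0) := by
  apply strictMonoOn_of_deriv_pos (convex_Ici 0) g_continuous.continuousOn
  intro t ht
  rw [interior_Ici] at ht
  rw [(g_hasDerivAt ht).deriv]
  exact Lf_pos ht

lemma g_zero : g 0 = 0 := by simp [g]

lemma g_surj {x : ℝ} (hx : 0 ≤ x) : ∃ y, 0 ≤ y ∧ g y = x := by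
  set b := Real.exp x with hb
  have hbpos : 0 < b := Real.exp_pos x
  have hxb : x ≤ g b := by
    have h1 : Real.log b ≤ Real.log (b + 1) :=
      Real.log_le_log (by positivity) (by linarith)
    have h2 : Real.log b = x := Real.log_exp x
    have h3 : 0 ≤ b * (Real.log (b + 1) - Real.log b) :=
      mul_nonneg hbpos.le (by linarith)
    have : g b = Real.log (b + 1) + b * (Real.log (b + 1) - Real.log b) := by
      unfold g; ring
    linarith
  have hmem : x ∈ Set.Icc (g 0) (g b) := by
    rw [g_zero]; exact ⟨hx, hxb⟩
  obtain ⟨y, hy, hgy⟩ := intermediate_value_Icc hbpos.le g_continuous.continuousOn hmem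
  exact ⟨y, hy.1, hgy⟩

lemma ginv_spec {x : ℝ} (hx : 0 ≤ x) :
    ∃ y, 0 ≤ y ∧ g y = x ∧ ginv x = y := by
  obtain ⟨y, hy, hgy⟩ := g_surj hx
  have hex : ∃ a ∈ Set.Ici (0:ℝ), g a = x := ⟨y, hy, hgy⟩
  exact ⟨ginv x, Function.invFunOn_mem hex, Function.invFunOn_eq hex, rfl⟩

lemma phi_mono : MonotoneOn (fun t => t * (t + 1) * Lf t) (Set.Ioi 0) := by
  have hderiv : ∀ t : ℝ, 0 < t →
      HasDerivAt (fun t => t * (t + 1) * Lf t) ((2 * t + 1) * Lf t - 1) t := by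
    intro t ht
    have h1 : HasDerivAt (fun t : ℝ => t * (t + 1)) (2 * t + 1) t := by
      have := (hasDerivAt_id t).mul ((hasDerivAt_id t).add_const 1)
      refine this.congr_deriv ?_; simp only [id_eq]; ring
    have h2 := h1.mul (Lf_hasDerivAt ht)
    refine h2.congr_deriv ?_
    have h3 : t * (t + 1) * (1 / (t + 1) - 1 / t) = -1 := by
      field_simp; ring
    rw [h3]; ring
  apply monotoneOn_of_deriv_nonneg (convex_Ioi 0)
  · intro t ht
    exact ((hderiv t ht).continuousAt).continuousWithinAt
  · intro t ht
    rw [interior_Ioi] at ht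
    exact (hderiv t ht).differentiableAt.differentiableWithinAt
  · intro t ht
    rw [interior_Ioi] at ht
    have ht' : (0:ℝ) < t := ht
    rw [(hderiv t ht').deriv]
    have h1 : 1 / (t + 1) ≤ Lf t := Lf_ge ht'
    have h2 : (1:ℝ) ≤ (2 * t + 1) * (1 / (t + 1)) := by
      rw [mul_one_div, le_div_iff₀ (by linarith : (0:ℝ) < t + 1)]
      linarith
    have h3 : (2 * t + 1) * (1 / (t + 1)) ≤ (2 * t + 1) * Lf t :=
      mul_le_mul_of_nonneg_left h1 (by linarith)
    linarith

lemma psi_mono {E : ℝ} (hE : 0 ≤ E) :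
    MonotoneOn (fun t => Lf (t + E) / Lf t) (Set.Ioi 0) := by
  have hderiv : ∀ t : ℝ, 0 < t →
      HasDerivAt (fun t => Lf (t + E) / Lf t)
        (((1 / (t + E + 1) - 1 / (t + E)) * Lf t -
          Lf (t + E) * (1 / (t + 1) - 1 / t)) / (Lf t) ^ 2) t := by
    intro t ht
    have htE : 0 < t + E := by linarith
    have h1 : HasDerivAt (fun t : ℝ => Lf (t + E)) (1 / (t + E + 1) - 1 / (t + E)) t := by
      have := (Lf_hasDerivAt htE).comp t ((hasDerivAt_id t).add_const E)
      simpa [Function.comp_def] using this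
    exact h1.div (Lf_hasDerivAt ht) (Lf_pos ht).ne'
  apply monotoneOn_of_deriv_nonneg (convex_Ioi 0)
  · intro t ht
    exact ((hderiv t ht).continuousAt).continuousWithinAt
  · intro t ht
    rw [interior_Ioi] at ht
    exact (hderiv t ht).differentiableAt.differentiableWithinAt
  · intro t ht
    rw [interior_Ioi] at ht
    have ht' : (0:ℝ) < t := ht
    rw [(hderiv t ht').deriv]
    have htE : 0 < t + E := by linarith
    apply div_nonneg _ (sq_nonneg _)
    have hphi : t * (t + 1) * Lf t ≤ (t + E) * (t + E + 1) * Lf (t + E) :=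
      phi_mono (Set.mem_Ioi.2 ht') (Set.mem_Ioi.2 htE) (by linarith)
    have h0 : t ≠ 0 := ht'.ne'
    have h1 : t + 1 ≠ 0 := by linarith
    have h2 : t + E ≠ 0 := htE.ne'
    have h3 : t + E + 1 ≠ 0 := by linarith
    have heq : (1 / (t + E + 1) - 1 / (t + E)) * Lf t - Lf (t + E) * (1 / (t + 1) - 1 / t)
        = ((t + E) * (t + E + 1) * Lf (t + E) - t * (t + 1) * Lf t) /
          ((t + E) * (t + E + 1) * (t * (t + 1))) := by
      field_simp; ring
    rw [heq]
    apply div_nonneg (by linarith)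
    positivity
  
lemma key_ineq {E : ℝ} (hE : 0 ≤ E) {a b : ℝ} (ha : 0 < a) (hab : a ≤ b) :
    Lf (a + E) * Lf b ≤ Lf (b + E) * Lf a := by
  have hb : 0 < b := lt_of_lt_of_le ha hab
  have h := psi_mono hE (Set.mem_Ioi.2 ha) (Set.mem_Ioi.2 hb) hab
  rw [div_le_div_iff₀ (Lf_pos ha) (Lf_pos hb)] at h
  linarith

theorem additive_noise_thermal_entropy_monotone_convex (E : ℝ) (hE : 0 ≤ E) :
    MonotoneOn (fun x => g (ginv x + E)) (Set.Ici 0) ∧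
      ConvexOn ℝ (Set.Ici 0) (fun x => g (ginv x + E)) := by
  -- ginv is monotone and inverts g
  have hginv_lt : ∀ {x1 x2 y1 y2 : ℝ}, 0 ≤ y1 → 0 ≤ y2 → g y1 = x1 → g y2 = x2 →
      x1 < x2 → y1 < y2 := by
    intro x1 x2 y1 y2 hy1 hy2 hg1 hg2 h12
    by_contra hcon
    push_neg at hcon
    have := g_strictMono.monotoneOn (Set.mem_Ici.2 hy2) (Set.mem_Ici.2 hy1) hcon
    rw [hg1, hg2] at this
    linarith
  constructor
  · -- Monotonicity
    intro x1 hx1 x2 hx2 h12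
    obtain ⟨y1, hy1, hg1, hi1⟩ := ginv_spec (Set.mem_Ici.1 hx1)
    obtain ⟨y2, hy2, hg2, hi2⟩ := ginv_spec (Set.mem_Ici.1 hx2)
    simp only [hi1, hi2]
    have hy12 : y1 ≤ y2 := by
      rcases eq_or_lt_of_le h12 with rfl | hlt
      · have : y1 = y2 := by
          have := g_strictMono.injOn (Set.mem_Ici.2 hy1) (Set.mem_Ici.2 hy2)
            (by rw [hg1, hg2])
          exact this
        exact this.le
      · exact (hginv_lt hy1 hy2 hg1 hg2 hlt).le
    exact g_strictMono.monotoneOn (Set.mem_Ici.2 (by linarith : (0:ℝ) ≤ y1 + E))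
      (Set.mem_Ici.2 (by linarith : (0:ℝ) ≤ y2 + E)) (by linarith)
  · -- Convexity
    apply convexOn_of_slope_mono_adjacent (convex_Ici 0)
    intro x1 x2 x3 hx1 hx3 h12 h23
    have hx1' : (0:ℝ) ≤ x1 := hx1
    have hx2' : (0:ℝ) ≤ x2 := le_of_lt (lt_of_le_of_lt hx1' h12)
    have hx3' : (0:ℝ) ≤ x3 := hx3
    obtain ⟨y1, hy1, hg1, hi1⟩ := ginv_spec hx1'
    obtain ⟨y2, hy2, hg2, hi2⟩ := ginv_spec hx2'
    obtain ⟨y3, hy3, hg3, hi3⟩ := ginv_spec hx3'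
    simp only [hi1, hi2, hi3]
    have hy12 : y1 < y2 := hginv_lt hy1 hy2 hg1 hg2 h12
    have hy23 : y2 < y3 := hginv_lt hy2 hy3 hg2 hg3 h23
    -- the shifted function and its derivative
    have hcont : Continuous fun y : ℝ => g (y + E) :=
      g_continuous.comp (continuous_id.add continuous_const)
    have hder : ∀ c : ℝ, 0 < c → HasDerivAt (fun y : ℝ => g (y + E)) (Lf (c + E)) c := by
      intro c hc
      have hcE : 0 < c + E := by linarith
      have := (g_hasDerivAt hcE).comp c ((hasDerivAt_id c).add_const E)
      simpa [Function.comp_def] using this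
    -- Cauchy MVT on [y1, y2]
    obtain ⟨c1, hc1, heq1⟩ := exists_ratio_hasDerivAt_eq_ratio_slope
      (fun y : ℝ => g (y + E)) (fun c => Lf (c + E)) hy12 hcont.continuousOn
      (fun c hc => hder c (lt_of_le_of_lt hy1 hc.1))
      g (fun c => Lf c) g_continuous.continuousOn
      (fun c hc => g_hasDerivAt (lt_of_le_of_lt hy1 hc.1))
    obtain ⟨c2, hc2, heq2⟩ := exists_ratio_hasDerivAt_eq_ratio_slope
      (fun y : ℝ => g (y + E)) (fun c => Lf (c + E)) hy23 hcont.continuousOn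
      (fun c hc => hder c (lt_of_le_of_lt hy2 hc.1))
      g (fun c => Lf c) g_continuous.continuousOn
      (fun c hc => g_hasDerivAt (lt_of_le_of_lt hy2 hc.1))
    have hc1pos : 0 < c1 := lt_of_le_of_lt hy1 hc1.1
    have hc2pos : 0 < c2 := lt_of_le_of_lt hy2 hc2.1
    have hc12 : c1 ≤ c2 := le_of_lt (lt_trans hc1.2 hc2.1)
    have hkey : Lf (c1 + E) * Lf c2 ≤ Lf (c2 + E) * Lf c1 := key_ineq hE hc1pos hc12
    set A := g y2 - g y1 with hA
    set B := g y3 - g y2 with hB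
    set P := g (y2 + E) - g (y1 + E) with hP
    set Q := g (y3 + E) - g (y2 + E) with hQ
    have hApos : 0 < A := by
      have := g_strictMono (Set.mem_Ici.2 hy1) (Set.mem_Ici.2 hy2) hy12
      simp only [hA]; linarith
    have hBpos : 0 < B := by
      have := g_strictMono (Set.mem_Ici.2 hy2) (Set.mem_Ici.2 hy3) hy23
      simp only [hB]; linarith
    have hL1 : 0 < Lf c1 := Lf_pos hc1pos
    have hL2 : 0 < Lf c2 := Lf_pos hc2pos
    -- heq1 : A * Lf (c1 + E) = P * Lf c1 ; heq2 : B * Lf (c2 + E) = Q * Lf c2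
    have hmain : P * B ≤ Q * A := by
      have h4 : P * B * (Lf c1 * Lf c2) ≤ Q * A * (Lf c1 * Lf c2) := by
        calc P * B * (Lf c1 * Lf c2) = (P * Lf c1) * (B * Lf c2) := by ring
          _ = (A * Lf (c1 + E)) * (B * Lf c2) := by rw [heq1]
          _ = (Lf (c1 + E) * Lf c2) * (A * B) := by ring
          _ ≤ (Lf (c2 + E) * Lf c1) * (A * B) :=
              mul_le_mul_of_nonneg_right hkey (mul_pos hApos hBpos).le
          _ = (B * Lf (c2 + E)) * (A * Lf c1) := by ring
          _ = (Q * Lf c2) * (A * Lf c1) := by rw [heq2]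
          _ = Q * A * (Lf c1 * Lf c2) := by ring
      exact le_of_mul_le_mul_right h4 (mul_pos hL1 hL2)
    have hx21 : x2 - x1 = A := by rw [hA, hg1, hg2]
    have hx32 : x3 - x2 = B := by rw [hB, hg2, hg3]
    rw [div_le_div_iff₀ (by rw [hx21]; exact hApos) (by rw [hx32]; exact hBpos),
      hx21, hx32]
    calc (g (y2 + E) - g (y1 + E)) * B = P * B := by rw [hP]
      _ ≤ Q * A := hmain
      _ = (g (y3 + E) - g (y2 + E)) * A := by rw [hQ]
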